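/- Let m ≥ 1 and let x ∈ ℝ^m be a nonzero vector. Define σ := −sign(x₁)·‖x‖₂, where sign(t) = 1 if t ≥ 0 and −1 otherwise, and v := x − σ·e₁. Then v₁ = x₁ − σ ≠ 0, and the normalized Householder vector v̄ := v/v₁ (which has first component 1) together with the constant β̄ := −v₁/σ satisfies (I − β̄·v̄·v̄ᵀ)·x = σ·e₁. -/

import Mathlib

open Matrix

/-- Euclidean norm of a vector in `ℝ^m`. -/
noncomputable def enorm2 {m : ℕ} (x : Fin m → ℝ) : ℝ := Real.sqrt (∑ i, x i ^ 2)

/-- First standard basis vector of `ℝ^m`. -/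
def e1 {m : ℕ} (hm : 0 < m) : Fin m → ℝ := Pi.single (⟨0, hm⟩ : Fin m) (1 : ℝ)

/-- LAPACK-style normalized Householder reflector: for nonzero `x ∈ ℝ^m`, with
`σ = −sign(x₁)·‖x‖₂` and `v = x − σe₁`, the first component `v₁ = x₁ − σ` is
nonzero, the normalized vector `v̄ = v/v₁` has first component `1`, and with
`β̄ = −v₁/σ` one has `(I − β̄·v̄·v̄ᵀ)·x = σ·e₁`. -/
theorem stmt_14 (m : ℕ) (hm : 0 < m) (x : Fin m → ℝ) (hx : x ≠ 0)
    (σ : ℝ)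
    (hσ : σ = -(if 0 ≤ x ⟨0, hm⟩ then (1 : ℝ) else -1) * enorm2 x)
    (v : Fin m → ℝ) (hv : v = x - σ • e1 hm)
    (vbar : Fin m → ℝ) (hvbar : vbar = (v ⟨0, hm⟩)⁻¹ • v)
    (βbar : ℝ) (hβbar : βbar = -(v ⟨0, hm⟩) / σ) :
    v ⟨0, hm⟩ = x ⟨0, hm⟩ - σ ∧
    v ⟨0, hm⟩ ≠ 0 ∧
    vbar ⟨0, hm⟩ = 1 ∧
    ((1 : Matrix (Fin m) (Fin m) ℝ) - βbar • Matrix.vecMulVec vbar vbar).mulVec x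
      = σ • e1 hm := by
  set i0 : Fin m := ⟨0, hm⟩ with hi0
  -- positivity of the sum of squares
  have hxS : 0 < ∑ i, x i ^ 2 := by
    obtain ⟨j, hj⟩ : ∃ j, x j ≠ 0 := by
      by_contra h
      push_neg at h
      exact hx (funext h)
    have : 0 < x j ^ 2 := by positivity
    calc 0 < x j ^ 2 := this
      _ ≤ ∑ i, x i ^ 2 :=
        Finset.single_le_sum (f := fun i => x i ^ 2) (fun i _ => sq_nonneg _) (Finset.mem_univ j)
  have henorm : 0 < enorm2 x := Real.sqrt_pos.mpr hxS
  have hσ2 : σ ^ 2 = ∑ i, x i ^ 2 := by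
    have h2 : enorm2 x ^ 2 = ∑ i, x i ^ 2 := Real.sq_sqrt hxS.le
    rw [hσ]
    split_ifs <;> nlinarith [h2]
  have hσne : σ ≠ 0 := by
    rw [hσ]
    split_ifs <;> simp [henorm.ne']
  have hnorm_eq : |σ| = enorm2 x := by
    rw [hσ]
    rcases le_or_gt 0 (x i0) with h | h
    · rw [if_pos h]; simp [abs_of_nonpos, henorm.le, abs_of_nonneg henorm.le]
    · rw [if_neg (not_le.mpr h)]; simp [abs_of_nonneg henorm.le]
  have hv1 : v i0 = x i0 - σ := by
    rw [hv]
    simp [e1, hi0, Pi.single_eq_same]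
  have hv1ne : v i0 ≠ 0 := by
    rw [hv1, hσ]
    rcases le_or_gt 0 (x i0) with h | h
    · rw [if_pos h]
      have : 0 < x i0 + enorm2 x := by linarith
      intro hc; apply this.ne'; linarith [hc]
    · rw [if_neg (not_le.mpr h)]
      have : x i0 - enorm2 x < 0 := by linarith
      intro hc; apply this.ne; linarith [hc]
  have hvbar1 : vbar i0 = 1 := by
    rw [hvbar]; simp [inv_mul_cancel₀ hv1ne]
  refine ⟨hv1, hv1ne, hvbar1, ?_⟩
  -- key dot product: ∑ v i * x i = σ * (σ - x i0) = -σ * v i0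
  have hdot : ∑ i, v i * x i = -σ * v i0 := by
    have : ∑ i, v i * x i = (∑ i, x i ^ 2) - σ * x i0 := by
      rw [hv]
      simp only [Pi.sub_apply, Pi.smul_apply, smul_eq_mul, sub_mul]
      rw [Finset.sum_sub_distrib]
      congr 1
      · exact Finset.sum_congr rfl fun i _ => (sq (x i)).symm
      · have : ∀ i, σ * e1 hm i * x i = if i0 = i then σ * x i else 0 := by
          intro i
          rcases eq_or_ne i0 i with h | h
          · subst h; simp [e1, hi0, Pi.single_eq_same]
          · simp [e1, Pi.single_eq_of_ne (Ne.symm h : i ≠ ⟨0, hm⟩), h]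
        simp only [this]
        rw [Finset.sum_ite_eq Finset.univ i0 (fun i => σ * x i)]
        simp
    rw [this, ← hσ2, hv1]; ring
  have hdot2 : ∑ i, vbar i * x i = -σ := by
    have h1 : ∑ i, vbar i * x i = (v i0)⁻¹ * ∑ i, v i * x i := by
      rw [Finset.mul_sum]
      refine Finset.sum_congr rfl fun i _ => ?_
      rw [hvbar]; simp only [Pi.smul_apply, smul_eq_mul]; ring
    rw [h1, hdot]
    field_simp
  funext j
  have hmv : (Matrix.vecMulVec vbar vbar).mulVec x j = vbar j * ∑ i, vbar i * x i := by
    simp only [Matrix.mulVec, dotProduct, Matrix.vecMulVec_apply]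
    rw [Finset.mul_sum]
    exact Finset.sum_congr rfl fun i _ => by ring
  rw [Matrix.sub_mulVec, Matrix.one_mulVec, Matrix.smul_mulVec]
  simp only [Pi.sub_apply, Pi.smul_apply, smul_eq_mul]
  rw [hmv, hdot2]
  have hvj : v j = x j - σ * e1 hm j := by rw [hv]; simp
  have hvbj : vbar j = (v i0)⁻¹ * v j := by rw [hvbar]; simp
  rw [hvbj, hβbar, hvj]
  field_simp
  ring
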